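/- Let V be a bounded linear operator on a Hilbert space H and suppose V is regular, i.e., range(V) is closed and ker(V) ⊆ Vⁿ(H) for all n ∈ ℕ. Then V* is also regular: ker(V*) ⊆ (V*)ⁿ(H) for all n ∈ ℕ. -/

import Mathlib

open ContinuousLinearMap
open scoped ComplexInnerProductSpace

/-- The four Penrose equations: `Vd` is the Moore–Penrose inverse of `V`. -/
def IsMoorePenrose {H : Type*} [NormedAddCommGroup H] [InnerProductSpace ℂ H]
    [CompleteSpace H] (V Vd : H →L[ℂ] H) : Prop :=
  V ∘L Vd ∘L V = V ∧ Vd ∘L V ∘L Vd = Vd ∧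
    adjoint (V ∘L Vd) = V ∘L Vd ∧ adjoint (Vd ∘L V) = Vd ∘L V

variable {H : Type*} [NormedAddCommGroup H] [InnerProductSpace ℂ H] [CompleteSpace H]

/-- Open mapping: preimages with norm control for a closed-range operator. -/
private lemma aux_pre (W : H →L[ℂ] H) (hcl : IsClosed (LinearMap.range ((W : H →L[ℂ] H) : H →ₗ[ℂ] H) : Set H)) :
    ∃ C : ℝ, 0 < C ∧ ∀ y ∈ LinearMap.range ((W : H →L[ℂ] H) : H →ₗ[ℂ] H), ∃ x, W x = y ∧ ‖x‖ ≤ C * ‖y‖ := by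
  haveI : CompleteSpace (LinearMap.range ((W : H →L[ℂ] H) : H →ₗ[ℂ] H)) := hcl.completeSpace_coe
  set f : H →L[ℂ] (LinearMap.range ((W : H →L[ℂ] H) : H →ₗ[ℂ] H)) :=
    W.codRestrict (LinearMap.range ((W : H →L[ℂ] H) : H →ₗ[ℂ] H)) (fun x => LinearMap.mem_range_self _ x) with hf
  have hsurj : Function.Surjective f := by
    rintro ⟨y, x, rfl⟩
    exact ⟨x, rfl⟩
  obtain ⟨C, hC0, h⟩ := f.exists_preimage_norm_le hsurj
  refine ⟨C, hC0, fun y hy => ?_⟩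
  obtain ⟨x, hx, hxn⟩ := h ⟨y, hy⟩
  refine ⟨x, congrArg Subtype.val hx, ?_⟩
  simpa using hxn

/-- Image of a closed submodule on which `W` is bounded below is closed. -/
private lemma aux_img (W : H →L[ℂ] H) (M : Submodule ℂ H) (hM : IsClosed (M : Set H))
    (C : ℝ) (hb : ∀ z ∈ M, ‖z‖ ≤ C * ‖W z‖) :
    IsClosed ((M.map ((W : H →L[ℂ] H) : H →ₗ[ℂ] H) : Submodule ℂ H) : Set H) := by
  haveI : CompleteSpace M := hM.completeSpace_coe
  set g : M →L[ℂ] H := W.comp M.subtypeL with hg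
  have hb' : ∀ x : M, ‖x‖ ≤ C.toNNReal * ‖g x‖ := by
    intro x
    have := hb x x.2
    have hle : (C : ℝ) ≤ C.toNNReal := Real.le_coe_toNNReal C
    calc ‖(x : H)‖ ≤ C * ‖W x‖ := this
      _ ≤ C.toNNReal * ‖W x‖ := by
          exact mul_le_mul_of_nonneg_right hle (norm_nonneg _)
  have hanti : AntilipschitzWith C.toNNReal g := g.antilipschitz_of_bound hb'
  have hrange : Set.range g = ((M.map ((W : H →L[ℂ] H) : H →ₗ[ℂ] H) : Submodule ℂ H) : Set H) := by
    ext y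
    constructor
    · rintro ⟨⟨x, hx⟩, rfl⟩
      exact ⟨x, hx, rfl⟩
    · rintro ⟨x, hx, rfl⟩
      exact ⟨⟨x, hx⟩, rfl⟩
  rw [← hrange]
  exact hanti.isClosed_range g.uniformContinuous

/-- Bounded below on the orthogonal complement of the kernel. -/
private lemma aux_kerbound (W : H →L[ℂ] H) (hcl : IsClosed (LinearMap.range ((W : H →L[ℂ] H) : H →ₗ[ℂ] H) : Set H)) :
    ∃ C : ℝ, 0 < C ∧ ∀ x ∈ (LinearMap.ker ((W : H →L[ℂ] H) : H →ₗ[ℂ] H))ᗮ, ‖x‖ ≤ C * ‖W x‖ := by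
  obtain ⟨C, hC0, hC⟩ := aux_pre W hcl
  refine ⟨C, hC0, fun x hx => ?_⟩
  obtain ⟨u, hu, hun⟩ := hC (W x) (LinearMap.mem_range_self _ x)
  have hker : x - u ∈ LinearMap.ker ((W : H →L[ℂ] H) : H →ₗ[ℂ] H) := by
    simp [LinearMap.mem_ker, map_sub, hu]
  have h0 : ⟪x - u, x⟫ = 0 := (Submodule.mem_orthogonal _ x).1 hx _ hker
  have hxx : ⟪x, x⟫ = ⟪u, x⟫ := by
    have := inner_sub_left (𝕜 := ℂ) x u x
    rw [h0] at this
    linear_combination -this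
  have hnorm : ‖x‖ ^ 2 ≤ ‖u‖ * ‖x‖ := by
    have h1 : (‖x‖ : ℝ) ^ 2 = ‖⟪x, x⟫‖ := by
      rw [inner_self_eq_norm_sq_to_K]
      simp [sq_abs]
    rw [h1, hxx]
    exact norm_inner_le_norm _ _
  rcases eq_or_lt_of_le (norm_nonneg x) with h | h
  · rw [← h]
    positivity
  · have : ‖x‖ ≤ ‖u‖ := by nlinarith
    calc ‖x‖ ≤ ‖u‖ := this
      _ ≤ C * ‖W x‖ := hun

/-- ker(adjoint W) ⊇ (range W)ᗮ. -/
private lemma aux_orth_le_ker_adj (W : H →L[ℂ] H) :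
    (LinearMap.range ((W : H →L[ℂ] H) : H →ₗ[ℂ] H))ᗮ ≤ LinearMap.ker (((adjoint W) : H →L[ℂ] H) : H →ₗ[ℂ] H) := by
  intro x hx
  rw [LinearMap.mem_ker]
  refine ext_inner_left ℂ (fun v => ?_)
  rw [ContinuousLinearMap.coe_coe, adjoint_inner_right, inner_zero_right]
  exact (Submodule.mem_orthogonal _ x).1 hx _ (LinearMap.mem_range_self _ v)

/-- If `W` has closed range then `(ker W)ᗮ ≤ range (adjoint W)`. -/
private lemma aux_adj_range (W : H →L[ℂ] H) (hcl : IsClosed (LinearMap.range ((W : H →L[ℂ] H) : H →ₗ[ℂ] H) : Set H)) :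
    (LinearMap.ker ((W : H →L[ℂ] H) : H →ₗ[ℂ] H))ᗮ ≤ LinearMap.range (((adjoint W) : H →L[ℂ] H) : H →ₗ[ℂ] H) := by
  obtain ⟨C, hC0, hC⟩ := aux_pre W hcl
  -- the adjoint is bounded below on range W
  have hb : ∀ z ∈ LinearMap.range ((W : H →L[ℂ] H) : H →ₗ[ℂ] H), ‖z‖ ≤ C * ‖adjoint W z‖ := by
    intro z hz
    obtain ⟨u, hu, hun⟩ := hC z hz
    have h1 : (‖z‖ : ℝ) ^ 2 = ‖⟪u, adjoint W z⟫‖ := by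
      rw [adjoint_inner_right, hu, inner_self_eq_norm_sq_to_K]
      simp [sq_abs]
    have h2 : ‖⟪u, adjoint W z⟫‖ ≤ ‖u‖ * ‖adjoint W z‖ := norm_inner_le_norm _ _
    rcases eq_or_lt_of_le (norm_nonneg z) with h | h
    · rw [← h]; positivity
    · have := h1 ▸ h2
      nlinarith [norm_nonneg (adjoint W z), hun, mul_le_mul_of_nonneg_right hun
        (norm_nonneg (adjoint W z))]
  -- hence the image of range W under adjoint W is closed
  have himg : IsClosed (((LinearMap.range ((W : H →L[ℂ] H) : H →ₗ[ℂ] H)).map (((adjoint W) : H →L[ℂ] H) : H →ₗ[ℂ] H) : Submodule ℂ H) : Set H) :=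
    aux_img (adjoint W) _ hcl C hb
  -- this image is all of range (adjoint W)
  have heq : (LinearMap.range ((W : H →L[ℂ] H) : H →ₗ[ℂ] H)).map (((adjoint W) : H →L[ℂ] H) : H →ₗ[ℂ] H) = LinearMap.range (((adjoint W) : H →L[ℂ] H) : H →ₗ[ℂ] H) := by
    apply le_antisymm
    · rintro _ ⟨x, -, rfl⟩
      exact LinearMap.mem_range_self _ x
    · rintro _ ⟨y, rfl⟩
      haveI : CompleteSpace (LinearMap.range ((W : H →L[ℂ] H) : H →ₗ[ℂ] H)) := hcl.completeSpace_coe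
      obtain ⟨p, hp, q, hq, rfl⟩ := (LinearMap.range ((W : H →L[ℂ] H) : H →ₗ[ℂ] H)).exists_add_mem_mem_orthogonal y
      have hq0 : adjoint W q = 0 := aux_orth_le_ker_adj W hq
      refine ⟨p, hp, ?_⟩
      rw [map_add, ContinuousLinearMap.coe_coe, hq0, add_zero]
  rw [heq] at himg
  -- now double orthogonal
  haveI : CompleteSpace (LinearMap.range (((adjoint W) : H →L[ℂ] H) : H →ₗ[ℂ] H)) := himg.completeSpace_coe
  have horth : (LinearMap.range (((adjoint W) : H →L[ℂ] H) : H →ₗ[ℂ] H))ᗮ = LinearMap.ker ((W : H →L[ℂ] H) : H →ₗ[ℂ] H) := by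
    ext x
    constructor
    · intro hx
      rw [LinearMap.mem_ker]
      refine ext_inner_left ℂ (fun v => ?_)
      rw [ContinuousLinearMap.coe_coe, ← adjoint_inner_left, inner_zero_right]
      exact (Submodule.mem_orthogonal _ x).1 hx _ (LinearMap.mem_range_self _ v)
    · intro hx
      rw [Submodule.mem_orthogonal]
      rintro _ ⟨v, rfl⟩
      rw [ContinuousLinearMap.coe_coe, adjoint_inner_left, (show W x = 0 from LinearMap.mem_ker.1 hx), inner_zero_right]
  have hfinal : (LinearMap.ker ((W : H →L[ℂ] H) : H →ₗ[ℂ] H))ᗮ = LinearMap.range (((adjoint W) : H →L[ℂ] H) : H →ₗ[ℂ] H) := by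
    conv_lhs => rw [← horth]
    exact Submodule.orthogonal_orthogonal _
  exact le_of_eq hfinal

/-- If V is regular then V* is regular. -/
theorem stmt11 (V : H →L[ℂ] H)
    (hcl : IsClosed (LinearMap.range (V : H →ₗ[ℂ] H) : Set H))
    (hreg : ∀ n : ℕ, LinearMap.ker (V : H →ₗ[ℂ] H) ≤ LinearMap.range ((V ^ n : H →L[ℂ] H) : H →ₗ[ℂ] H)) :
    ∀ n : ℕ, LinearMap.ker (adjoint V : H →ₗ[ℂ] H) ≤ LinearMap.range (((adjoint V) ^ n : H →L[ℂ] H) : H →ₗ[ℂ] H) := by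
  -- the kernel of each power is contained in the range of V
  have hkerpow : ∀ n : ℕ, LinearMap.ker (((V ^ n) : H →L[ℂ] H) : H →ₗ[ℂ] H) ≤ LinearMap.range ((V : H →L[ℂ] H) : H →ₗ[ℂ] H) := by
    intro n
    induction n with
    | zero =>
      intro x hx
      have : x = 0 := by simpa using LinearMap.mem_ker.1 hx
      simp [this]
    | succ n ih =>
      intro x hx
      have hx' : V ((V ^ n) x) = 0 := by
        have := LinearMap.mem_ker.1 hx
        rwa [ContinuousLinearMap.coe_coe, pow_succ', ContinuousLinearMap.mul_apply] at this
      obtain ⟨y, hy⟩ := hreg (n + 1) hx'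
      have hy' : (V ^ n) (V y) = (V ^ n) x := by
        rw [← ContinuousLinearMap.mul_apply, ← pow_succ]; exact hy
      have : x - V y ∈ LinearMap.ker (((V ^ n) : H →L[ℂ] H) : H →ₗ[ℂ] H) := by
        rw [LinearMap.mem_ker, ContinuousLinearMap.coe_coe, map_sub, hy', sub_self]
      obtain ⟨z, hz⟩ := ih this
      exact ⟨z + y, by rw [map_add, hz, ContinuousLinearMap.coe_coe]; abel⟩
  -- the range of each power is closed
  have hclpow : ∀ n : ℕ, IsClosed ((LinearMap.range (((V ^ n) : H →L[ℂ] H) : H →ₗ[ℂ] H) : Submodule ℂ H) : Set H) := by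
    intro n
    induction n with
    | zero =>
      have he : ((LinearMap.range (((V ^ 0) : H →L[ℂ] H) : H →ₗ[ℂ] H) : Submodule ℂ H) : Set H) = Set.univ :=
        Set.eq_univ_iff_forall.2 fun x => ⟨x, by simp⟩
      rw [he]; exact isClosed_univ
    | succ n ih =>
      obtain ⟨C, hC0, hC⟩ := aux_kerbound V hcl
      have hstep : LinearMap.range (((V ^ (n + 1)) : H →L[ℂ] H) : H →ₗ[ℂ] H) =
          (LinearMap.range (((V ^ n) : H →L[ℂ] H) : H →ₗ[ℂ] H) ⊓ (LinearMap.ker ((V : H →L[ℂ] H) : H →ₗ[ℂ] H))ᗮ).map ((V : H →L[ℂ] H) : H →ₗ[ℂ] H) := by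
        apply le_antisymm
        · rintro _ ⟨x, rfl⟩
          have hx : (V ^ n) x ∈ LinearMap.range (((V ^ n) : H →L[ℂ] H) : H →ₗ[ℂ] H) := LinearMap.mem_range_self _ x
          haveI : CompleteSpace (LinearMap.ker ((V : H →L[ℂ] H) : H →ₗ[ℂ] H)) :=
            (ContinuousLinearMap.isClosed_ker V).completeSpace_coe
          obtain ⟨k, hk, p, hp, hdecomp⟩ :=
            (LinearMap.ker ((V : H →L[ℂ] H) : H →ₗ[ℂ] H)).exists_add_mem_mem_orthogonal ((V ^ n) x)
          refine ⟨p, ⟨?_, hp⟩, ?_⟩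
          · have : p = (V ^ n) x - k := by rw [hdecomp]; abel
            rw [this]
            exact sub_mem hx (hreg n hk)
          · have : V ((V ^ n) x) = V k + V p := by rw [← map_add, ← hdecomp]
            rw [pow_succ']; simp only [ContinuousLinearMap.coe_coe]
            rw [ContinuousLinearMap.mul_apply, this, (show V k = 0 from LinearMap.mem_ker.1 hk),
              zero_add]
        · rintro _ ⟨x, ⟨⟨y, rfl⟩, -⟩, rfl⟩
          exact ⟨y, by rw [pow_succ']; rfl⟩
      rw [hstep]
      refine aux_img V _ ?_ C ?_
      · exact ih.inter (Submodule.isClosed_orthogonal (LinearMap.ker ((V : H →L[ℂ] H) : H →ₗ[ℂ] H)))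
      · intro z hz
        exact hC z hz.2
  -- assemble
  intro n
  have h1 : LinearMap.ker (((adjoint V) : H →L[ℂ] H) : H →ₗ[ℂ] H) ≤ (LinearMap.range ((V : H →L[ℂ] H) : H →ₗ[ℂ] H))ᗮ := by
    intro x hx
    rw [Submodule.mem_orthogonal]
    rintro _ ⟨y, rfl⟩
    calc ⟪V y, x⟫ = ⟪y, adjoint V x⟫ := (adjoint_inner_right V y x).symm
      _ = 0 := by rw [(show adjoint V x = 0 from LinearMap.mem_ker.1 hx), inner_zero_right]
  have h2 : (LinearMap.range ((V : H →L[ℂ] H) : H →ₗ[ℂ] H))ᗮ ≤ (LinearMap.ker (((V ^ n) : H →L[ℂ] H) : H →ₗ[ℂ] H))ᗮ :=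
    Submodule.orthogonal_le (hkerpow n)
  have h3 : (LinearMap.ker (((V ^ n) : H →L[ℂ] H) : H →ₗ[ℂ] H))ᗮ ≤ LinearMap.range (((adjoint (V ^ n)) : H →L[ℂ] H) : H →ₗ[ℂ] H) :=
    aux_adj_range (V ^ n) (hclpow n)
  have h4 : adjoint (V ^ n) = (adjoint V) ^ n := by
    rw [← star_eq_adjoint, ← star_eq_adjoint, star_pow]
  intro x hx
  have := h3 (h2 (h1 hx))
  rwa [h4] at this
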